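/- Every regular perfect fluid solution with non-decreasing equation of state obeys the Buchdahl surface inequality 2M/R ≤ 8/9, where M = m(R) is the total mass and R the surface radius. -/

import Mathlib

open Set Filter intervalIntegral Real MeasureTheory

set_option maxHeartbeats 2000000 in
/-- **Buchdahl surface inequality.**
Every regular perfect fluid solution (units `G = c = 1`) with a non-decreasing equation of
state `ρ = f(p)` obeys `2M/R ≤ 8/9`, where `M = m(R)` and `R` is the surface radius. -/
theorem buchdahl_surface_inequality
    (R : ℝ) (hR : 0 < R)
    (f : ℝ → ℝ)
    (hf_nonneg : ∀ q : ℝ, 0 ≤ q → 0 ≤ f q)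
    (hf_mono : MonotoneOn f (Set.Ici 0))
    (hf_cont : ContinuousOn f (Set.Ici 0))
    (hf_pos : ∀ q : ℝ, 0 < q → 0 < f q)
    (m p : ℝ → ℝ)
    (hm_cont : ContinuousOn m (Set.Icc 0 R))
    (hp_cont : ContinuousOn p (Set.Icc 0 R))
    (hm0 : m 0 = 0)
    (hm_pos : ∀ r ∈ Set.Ioo 0 R, 0 < m r)
    (h2m : ∀ r ∈ Set.Ioo 0 R, 2 * m r < r)
    (hp_pos : ∀ r ∈ Set.Ico 0 R, 0 < p r)
    (hpR : p R = 0)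
    (hTOV_m : ∀ r ∈ Set.Ioo 0 R,
      HasDerivAt m (4 * Real.pi * r ^ 2 * f (p r)) r)
    (hTOV_p : ∀ r ∈ Set.Ioo 0 R,
      HasDerivAt p (-(f (p r) * m r / r ^ 2) * (1 + p r / f (p r)) *
        (1 + 4 * Real.pi * r ^ 3 * p r / m r) * (1 - 2 * m r / r)⁻¹) r)
    (hreg : Filter.Tendsto (fun r => m r / r ^ 3) (nhdsWithin 0 (Set.Ioi 0))
      (nhds (4 * Real.pi / 3 * f (p 0)))) :
    2 * m R / R ≤ 8 / 9 := by
  have hπ : (0:ℝ) < Real.pi := Real.pi_pos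
  -- p nonnegative on [0, R]
  have hp_nonneg : ∀ r ∈ Set.Icc 0 R, 0 ≤ p r := by
    intro r hr
    rcases eq_or_lt_of_le hr.2 with h | h
    · rw [h, hpR]
    · exact (hp_pos r ⟨hr.1, h⟩).le
  -- p is antitone on [0, R]
  have hp_anti : AntitoneOn p (Set.Icc 0 R) := by
    apply antitoneOn_of_hasDerivWithinAt_nonpos (convex_Icc 0 R) hp_cont
      (f' := fun r => -(f (p r) * m r / r ^ 2) * (1 + p r / f (p r)) *
        (1 + 4 * Real.pi * r ^ 3 * p r / m r) * (1 - 2 * m r / r)⁻¹)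
    · intro r hr
      rw [interior_Icc] at hr
      exact (hTOV_p r hr).hasDerivWithinAt
    · intro r hr
      rw [interior_Icc] at hr
      have hr0 : 0 < r := hr.1
      have hpr : 0 < p r := hp_pos r ⟨hr0.le, hr.2⟩
      have hfr : 0 < f (p r) := hf_pos _ hpr
      have hmr : 0 < m r := hm_pos r hr
      have hw : 0 < 1 - 2 * m r / r := by
        rw [sub_pos, div_lt_one hr0]; exact h2m r hr
      have h1 : 0 < f (p r) * m r / r ^ 2 := by positivity
      have h2 : 0 < 1 + p r / f (p r) := by positivity
      have h3 : 0 < 1 + 4 * Real.pi * r ^ 3 * p r / m r := by positivity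
      have h4 : 0 < (1 - 2 * m r / r)⁻¹ := by positivity
      nlinarith [mul_pos (mul_pos (mul_pos h1 h2) h3) h4]
  -- ρ = f ∘ p is antitone
  have hρ_anti : ∀ a ∈ Set.Icc 0 R, ∀ b ∈ Set.Icc 0 R, a ≤ b → f (p b) ≤ f (p a) := by
    intro a ha b hb hab
    exact hf_mono (hp_nonneg b hb) (hp_nonneg a ha) (hp_anti ha hb hab)
  -- mean density inequality : 4π r³ ρ(r) ≤ 3 m(r)
  have hmean : ∀ r ∈ Set.Ioo 0 R, 4 * Real.pi * r ^ 3 * f (p r) ≤ 3 * m r := by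
    intro r hr
    have hg : MonotoneOn (fun x => m x - 4 * Real.pi / 3 * f (p r) * x ^ 3)
        (Set.Icc 0 r) := by
      apply monotoneOn_of_hasDerivWithinAt_nonneg (convex_Icc 0 r)
        (f' := fun x => 4 * Real.pi * x ^ 2 * f (p x) - 4 * Real.pi / 3 * f (p r) * (3 * x ^ 2))
      · apply ContinuousOn.sub
        · exact hm_cont.mono (Set.Icc_subset_Icc le_rfl hr.2.le)
        · fun_prop
      · intro x hx
        rw [interior_Icc] at hx
        have hx' : x ∈ Set.Ioo 0 R := ⟨hx.1, hx.2.trans hr.2⟩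
        exact ((hTOV_m x hx').sub (((hasDerivAt_pow 3 x).const_mul
          (4 * Real.pi / 3 * f (p r))).congr_deriv (by ring))).hasDerivWithinAt
      · intro x hx
        rw [interior_Icc] at hx
        have hfx : f (p r) ≤ f (p x) :=
          hρ_anti x ⟨hx.1.le, (hx.2.trans hr.2).le⟩ r ⟨hr.1.le, hr.2.le⟩ hx.2.le
        have hpos : 0 ≤ 4 * Real.pi * x ^ 2 * (f (p x) - f (p r)) :=
          mul_nonneg (by positivity) (by linarith)
        nlinarith [hpos]
    have h0 : (0:ℝ) ∈ Set.Icc (0:ℝ) r := ⟨le_rfl, hr.1.le⟩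
    have hrr : r ∈ Set.Icc (0:ℝ) r := ⟨hr.1.le, le_rfl⟩
    have := hg h0 hrr hr.1.le
    simp only [hm0] at this
    nlinarith [this]
  -- m is monotone (used for m R > 0)
  have hm_mono : MonotoneOn m (Set.Icc 0 R) := by
    apply monotoneOn_of_hasDerivWithinAt_nonneg (convex_Icc 0 R) hm_cont
      (f' := fun r => 4 * Real.pi * r ^ 2 * f (p r))
    · intro r hr; rw [interior_Icc] at hr; exact (hTOV_m r hr).hasDerivWithinAt
    · intro r hr
      rw [interior_Icc] at hr
      have := hf_nonneg (p r) (hp_nonneg r ⟨hr.1.le, hr.2.le⟩)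
      positivity
  -- m r / r³ is antitone
  have hu : ∀ r s : ℝ, 0 < r → r ≤ s → s < R → m s / s ^ 3 ≤ m r / r ^ 3 := by
    intro r s hr hrs hsR
    have : AntitoneOn (fun x => m x / x ^ 3) (Set.Icc r s) := by
      apply antitoneOn_of_hasDerivWithinAt_nonpos (convex_Icc r s)
        (f' := fun x => (4 * Real.pi * x ^ 2 * f (p x) * x ^ 3 - m x * (3 * x ^ 2)) / (x ^ 3) ^ 2)
      · apply ContinuousOn.div
        · exact hm_cont.mono (Set.Icc_subset_Icc hr.le hsR.le)
        · fun_prop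
        · intro x hx
          have : 0 < x := lt_of_lt_of_le hr hx.1
          positivity
      · intro x hx
        rw [interior_Icc] at hx
        have hx0 : 0 < x := hr.trans hx.1
        exact ((hTOV_m x ⟨hx0, hx.2.trans hsR⟩).div
          ((hasDerivAt_pow 3 x).congr_deriv (by ring)) (by positivity)).hasDerivWithinAt
      · intro x hx
        rw [interior_Icc] at hx
        have hx0 : 0 < x := hr.trans hx.1
        have hxR : x ∈ Set.Ioo 0 R := ⟨hx0, hx.2.trans hsR⟩
        have := hmean x hxR
        have hnum : 4 * Real.pi * x ^ 2 * f (p x) * x ^ 3 - m x * (3 * x ^ 2) ≤ 0 := by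
          nlinarith [sq_nonneg x]
        apply div_nonpos_of_nonpos_of_nonneg hnum (by positivity)
    exact this ⟨le_rfl, hrs⟩ ⟨hrs, le_rfl⟩ hrs
  -- the key pointwise inequality
  have key : ∀ s ∈ Set.Ioo 0 R, 2 * m s / s ≤ 8 / 9 := by
    intro s hs
    obtain ⟨hs0, hsR⟩ := hs
    have hw_pos : ∀ t ∈ Set.Ioo 0 R, 0 < 1 - 2 * m t / t := by
      intro t ht
      rw [sub_pos, div_lt_one ht.1]
      exact h2m t ht
    obtain ⟨φ, hφdef⟩ : ∃ φ : ℝ → ℝ,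
        φ = fun t => (m t + 4 * Real.pi * t ^ 3 * p t) / (t ^ 2 * (1 - 2 * m t / t)) := ⟨_, rfl⟩
    have hmc : ContinuousOn m (Set.Ioo 0 R) := hm_cont.mono Set.Ioo_subset_Icc_self
    have hpc : ContinuousOn p (Set.Ioo 0 R) := hp_cont.mono Set.Ioo_subset_Icc_self
    have hφ_cont : ContinuousOn φ (Set.Ioo 0 R) := by
      rw [hφdef]
      apply ContinuousOn.div
      · exact hmc.add ((continuousOn_const.mul ((continuous_pow 3).continuousOn)).mul hpc)
      · apply ContinuousOn.mul ((continuous_pow 2).continuousOn)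
        apply ContinuousOn.sub continuousOn_const
        exact (continuousOn_const.mul hmc).div continuousOn_id (fun t ht => ht.1.ne')
      · intro t ht
        have h1 := hw_pos t ht
        have h2 := ht.1
        positivity
    have hφ_pos : ∀ t ∈ Set.Ioo 0 R, 0 < φ t := by
      intro t ht
      have h1 := hw_pos t ht
      have h2 := ht.1
      have h3 := hm_pos t ht
      have h4 := hp_pos t ⟨ht.1.le, ht.2⟩
      simp only [hφdef]
      have : 0 < m t + 4 * Real.pi * t ^ 3 * p t := by positivity
      positivity
    have hφ_int : ∀ t ∈ Set.Ioo 0 R, IntervalIntegrable φ MeasureTheory.volume s t := by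
      intro t ht
      apply ContinuousOn.intervalIntegrable
      exact hφ_cont.mono ((Set.ordConnected_Ioo).uIcc_subset ⟨hs0, hsR⟩ ht)
    obtain ⟨ζ, hζdef⟩ : ∃ ζ : ℝ → ℝ,
        ζ = fun t => Real.exp (∫ x in s..t, φ x) := ⟨_, rfl⟩
    have hζ_pos : ∀ t, 0 < ζ t := by
      intro t
      rw [hζdef]
      exact Real.exp_pos _
    have hζs : ζ s = 1 := by simp [hζdef]
    have hζ_deriv : ∀ t ∈ Set.Ioo 0 R, HasDerivAt ζ (ζ t * φ t) t := by
      intro t ht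
      have h1 : HasDerivAt (fun u => ∫ x in s..u, φ x) (φ t) t :=
        intervalIntegral.integral_hasDerivAt_right (hφ_int t ht)
          ((hφ_cont.stronglyMeasurableAtFilter isOpen_Ioo) t ht)
          (hφ_cont.continuousAt (isOpen_Ioo.mem_nhds ht))
      simp only [hζdef]
      exact h1.exp
    obtain ⟨Γ, hΓdef⟩ : ∃ Γ : ℝ → ℝ,
        Γ = fun t => ζ t * φ t * Real.sqrt (1 - 2 * m t / t) / t := ⟨_, rfl⟩
    have hΓ_deriv : ∀ t ∈ Set.Ioo 0 R, HasDerivAt Γ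
        (ζ t * Real.sqrt (1 - 2 * m t / t) * (4 * Real.pi * t ^ 3 * f (p t) - 3 * m t) /
          (t ^ 4 * (1 - 2 * m t / t))) t := by
      intro t ht
      have ht0 : (0:ℝ) < t := ht.1
      have ht0' : t ≠ 0 := ht0.ne'
      have hmt : 0 < m t := hm_pos t ht
      have hpt : 0 < p t := hp_pos t ⟨ht0.le, ht.2⟩
      have hft : 0 < f (p t) := hf_pos _ hpt
      have hw : 0 < 1 - 2 * m t / t := hw_pos t ht
      have hm' := hTOV_m t ht
      have hp' : HasDerivAt p (-((f (p t) + p t) * φ t)) t := by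
        have h := hTOV_p t ht
        have heq : -(f (p t) * m t / t ^ 2) * (1 + p t / f (p t)) *
            (1 + 4 * Real.pi * t ^ 3 * p t / m t) * (1 - 2 * m t / t)⁻¹
            = -((f (p t) + p t) * φ t) := by
          have hne2 : t - 2 * m t ≠ 0 := by
            have h2 := h2m t ht
            have : 0 < t - 2 * m t := by linarith
            exact this.ne'
          have hinv : (1 - 2 * m t / t)⁻¹ = t / (t - 2 * m t) := by
            rw [inv_eq_one_div, div_eq_div_iff hw.ne' hne2]
            field_simp
          simp only [hφdef]
          rw [hinv]
          field_simp
        rwa [heq] at h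
      have hw' : HasDerivAt (fun x => 1 - 2 * m x / x)
          (-((2 * (4 * Real.pi * t ^ 2 * f (p t)) * t - 2 * m t * 1) / t ^ 2)) t :=
        ((hm'.const_mul 2).div (hasDerivAt_id' (x := t)) ht0').const_sub 1
      have hA' : HasDerivAt (fun x => m x + 4 * Real.pi * x ^ 3 * p x)
          (4 * Real.pi * t ^ 2 * f (p t) +
            (4 * Real.pi * (↑(3:ℕ) * t ^ 2) * p t +
              4 * Real.pi * t ^ 3 * -((f (p t) + p t) * φ t))) t :=
        hm'.add (((hasDerivAt_pow 3 t).const_mul (4 * Real.pi)).mul hp')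
      have hD' : HasDerivAt (fun x => x ^ 2 * (1 - 2 * m x / x))
          ((↑(2:ℕ) * t ^ 1) * (1 - 2 * m t / t) +
            t ^ 2 * -((2 * (4 * Real.pi * t ^ 2 * f (p t)) * t - 2 * m t * 1) / t ^ 2)) t :=
        (hasDerivAt_pow 2 t).mul hw'
      have hDne : t ^ 2 * (1 - 2 * m t / t) ≠ 0 := by positivity
      have hφ' : HasDerivAt (fun t => (m t + 4 * Real.pi * t ^ 3 * p t) / (t ^ 2 * (1 - 2 * m t / t))) _ t :=
        hA'.div hD' hDne
      rw [← hφdef] at hφ'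
      have hζ' := hζ_deriv t ht
      have hy' : HasDerivAt (fun x => Real.sqrt (1 - 2 * m x / x))
          ((-((2 * (4 * Real.pi * t ^ 2 * f (p t)) * t - 2 * m t * 1) / t ^ 2)) /
            (2 * Real.sqrt (1 - 2 * m t / t))) t :=
        hw'.sqrt hw.ne'
      have hraw : HasDerivAt (fun t => ζ t * φ t * Real.sqrt (1 - 2 * m t / t) / t) _ t :=
        ((hζ'.mul hφ').mul hy').div (hasDerivAt_id' (x := t)) ht0'
      rw [hΓdef]
      convert hraw using 1
      simp only [Pi.mul_apply]
      have hy_pos : 0 < Real.sqrt (1 - 2 * m t / t) := Real.sqrt_pos.2 hw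
      set y := Real.sqrt (1 - 2 * m t / t) with hydef
      have hy2 : 1 - 2 * m t / t = y ^ 2 := (Real.sq_sqrt hw.le).symm
      have hy0 : y ≠ 0 := hy_pos.ne'
      simp only [hφdef]
      rw [hy2]
      have hyne : y ^ 2 ≠ 0 := pow_ne_zero 2 hy0
      field_simp
      ring
    have hΓ_pos : ∀ t ∈ Set.Ioo 0 R, 0 < Γ t := by
      intro t ht
      have h1 := hζ_pos t
      have h2 := hφ_pos t ht
      have h3 : 0 < Real.sqrt (1 - 2 * m t / t) := Real.sqrt_pos.2 (hw_pos t ht)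
      have h4 := ht.1
      rw [hΓdef]
      exact div_pos (mul_pos (mul_pos h1 h2) h3) h4
    have hΓ_anti : ∀ r : ℝ, 0 < r → r ≤ s → Γ s ≤ Γ r := by
      intro r hr0 hrs
      have hsub : Set.Icc r s ⊆ Set.Ioo 0 R := fun x hx =>
        ⟨lt_of_lt_of_le hr0 hx.1, lt_of_le_of_lt hx.2 hsR⟩
      have hanti : AntitoneOn Γ (Set.Icc r s) := by
        apply antitoneOn_of_hasDerivWithinAt_nonpos (convex_Icc r s)
          (f' := fun t => ζ t * Real.sqrt (1 - 2 * m t / t) *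
            (4 * Real.pi * t ^ 3 * f (p t) - 3 * m t) / (t ^ 4 * (1 - 2 * m t / t)))
        · exact fun x hx => (hΓ_deriv x (hsub hx)).continuousAt.continuousWithinAt
        · intro x hx
          rw [interior_Icc] at hx
          exact (hΓ_deriv x (hsub (Set.Ioo_subset_Icc_self hx))).hasDerivWithinAt
        · intro x hx
          rw [interior_Icc] at hx
          have hx' := hsub (Set.Ioo_subset_Icc_self hx)
          apply div_nonpos_of_nonpos_of_nonneg
          · have h1 := hmean x hx'
            have h2 := hζ_pos x
            have h3 : 0 ≤ Real.sqrt (1 - 2 * m x / x) := Real.sqrt_nonneg _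
            have h4 : 0 ≤ ζ x * Real.sqrt (1 - 2 * m x / x) *
                (3 * m x - 4 * Real.pi * x ^ 3 * f (p x)) :=
              mul_nonneg (mul_nonneg h2.le h3) (by linarith)
            have h5 : ζ x * Real.sqrt (1 - 2 * m x / x) *
                (4 * Real.pi * x ^ 3 * f (p x) - 3 * m x)
                = -(ζ x * Real.sqrt (1 - 2 * m x / x) *
                  (3 * m x - 4 * Real.pi * x ^ 3 * f (p x))) := by ring
            rw [h5]
            linarith
          · have h1 := hw_pos x hx'
            have h2 := hx'.1
            positivity
      exact hanti ⟨le_rfl, hrs⟩ ⟨hrs, le_rfl⟩ hrs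
    obtain ⟨K, hKdef⟩ : ∃ K : ℝ, K = m s / s ^ 3 := ⟨_, rfl⟩
    have hK_pos : 0 < K := by
      have := hm_pos s ⟨hs0, hsR⟩
      rw [hKdef]
      positivity
    obtain ⟨B, hBdef⟩ : ∃ B : ℝ → ℝ, B = fun t => Real.sqrt (1 - 2 * K * t ^ 2) := ⟨_, rfl⟩
    have hwK : ∀ t : ℝ, 0 < t → t ≤ s → 1 - 2 * m t / t ≤ 1 - 2 * K * t ^ 2 := by
      intro t ht0 hts
      have h1 : K ≤ m t / t ^ 3 := hKdef ▸ hu t s ht0 hts hsR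
      have h2 : 2 * K * t ^ 2 ≤ 2 * (m t / t ^ 3) * t ^ 2 := by nlinarith
      have h3 : 2 * (m t / t ^ 3) * t ^ 2 = 2 * m t / t := by
        field_simp
      linarith
    have hBw_pos : ∀ t : ℝ, 0 < t → t ≤ s → 0 < 1 - 2 * K * t ^ 2 := by
      intro t ht0 hts
      exact lt_of_lt_of_le (hw_pos t ⟨ht0, lt_of_le_of_lt hts hsR⟩) (hwK t ht0 hts)
    have hyB : ∀ t : ℝ, 0 < t → t ≤ s → Real.sqrt (1 - 2 * m t / t) ≤ B t := by
      intro t ht0 hts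
      rw [hBdef]
      exact Real.sqrt_le_sqrt (hwK t ht0 hts)
    have hB_pos : ∀ t : ℝ, 0 < t → t ≤ s → 0 < B t := by
      intro t ht0 hts
      rw [hBdef]
      exact Real.sqrt_pos.2 (hBw_pos t ht0 hts)
    have hζφ_ge : ∀ t : ℝ, 0 < t → t ≤ s → Γ s * t / B t ≤ ζ t * φ t := by
      intro t ht0 hts
      have htR : t ∈ Set.Ioo 0 R := ⟨ht0, lt_of_le_of_lt hts hsR⟩
      have hy_pos : 0 < Real.sqrt (1 - 2 * m t / t) := Real.sqrt_pos.2 (hw_pos t htR)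
      have hB0 := hB_pos t ht0 hts
      have hΓs_pos : 0 < Γ s := hΓ_pos s ⟨hs0, hsR⟩
      have hΓt_pos : 0 < Γ t := hΓ_pos t htR
      have heq : ζ t * φ t = Γ t * t / Real.sqrt (1 - 2 * m t / t) := by
        rw [eq_div_iff hy_pos.ne', hΓdef]
        show ζ t * φ t * Real.sqrt (1 - 2 * m t / t)
          = ζ t * φ t * Real.sqrt (1 - 2 * m t / t) / t * t
        rw [div_mul_cancel₀ _ ht0.ne']
      rw [heq]
      have h1 : Γ s * t / B t ≤ Γ s * t / Real.sqrt (1 - 2 * m t / t) := by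
        gcongr
        exact hyB t ht0 hts
      have h2 : Γ s * t / Real.sqrt (1 - 2 * m t / t)
          ≤ Γ t * t / Real.sqrt (1 - 2 * m t / t) := by
        gcongr
        exact hΓ_anti t ht0 hts
      linarith
    have hψ : ∀ a : ℝ, 0 < a → a < s →
        ζ a + Γ s / (2 * K) * B a ≤ ζ s + Γ s / (2 * K) * B s := by
      intro a ha0 has
      have hsub : Set.Icc a s ⊆ Set.Ioo 0 R := fun x hx =>
        ⟨lt_of_lt_of_le ha0 hx.1, lt_of_le_of_lt hx.2 hsR⟩
      have hB' : ∀ t : ℝ, 0 < t → t ≤ s → HasDerivAt B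
          ((-(2 * K * (↑(2:ℕ) * t ^ 1))) / (2 * Real.sqrt (1 - 2 * K * t ^ 2))) t := by
        intro t ht0 hts
        rw [hBdef]
        exact (((hasDerivAt_pow 2 t).const_mul (2 * K)).const_sub 1).sqrt (hBw_pos t ht0 hts).ne'
      have hmono : MonotoneOn (fun t => ζ t + Γ s / (2 * K) * B t) (Set.Icc a s) := by
        apply monotoneOn_of_hasDerivWithinAt_nonneg (convex_Icc a s)
          (f' := fun t => ζ t * φ t + Γ s / (2 * K) *
            ((-(2 * K * (↑(2:ℕ) * t ^ 1))) / (2 * Real.sqrt (1 - 2 * K * t ^ 2))))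
        · intro x hx
          have hx' := hsub hx
          exact ((hζ_deriv x hx').continuousAt.add
            ((hB' x (lt_of_lt_of_le ha0 hx.1) hx.2).continuousAt.const_mul
              (Γ s / (2 * K)))).continuousWithinAt
        · intro x hx
          rw [interior_Icc] at hx
          have hx0 : 0 < x := ha0.trans hx.1
          exact ((hζ_deriv x (hsub (Set.Ioo_subset_Icc_self hx))).add
            ((hB' x hx0 hx.2.le).const_mul (Γ s / (2 * K)))).hasDerivWithinAt
        · intro x hx
          rw [interior_Icc] at hx
          have hx0 : 0 < x := ha0.trans hx.1
          have hxs : x ≤ s := hx.2.le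
          have hB0 : 0 < Real.sqrt (1 - 2 * K * x ^ 2) := Real.sqrt_pos.2 (hBw_pos x hx0 hxs)
          have hBval : B x = Real.sqrt (1 - 2 * K * x ^ 2) := by rw [hBdef]
          have h1 := hζφ_ge x hx0 hxs
          rw [hBval] at h1
          have h2 : Γ s / (2 * K) * ((-(2 * K * (↑(2:ℕ) * x ^ 1))) /
              (2 * Real.sqrt (1 - 2 * K * x ^ 2)))
              = -(Γ s * x / Real.sqrt (1 - 2 * K * x ^ 2)) := by
            push_cast
            field_simp
          rw [h2]
          linarith
      exact hmono ⟨le_rfl, has.le⟩ ⟨has.le, le_rfl⟩ has.le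
    have hΓs_pos : 0 < Γ s := hΓ_pos s ⟨hs0, hsR⟩
    have hmain : Γ s / (2 * K) * (1 - B s) ≤ 1 := by
      have hev : ∀ᶠ a in nhdsWithin 0 (Set.Ioi 0),
          Γ s / (2 * K) * (B a - B s) ≤ 1 := by
        filter_upwards [Ioo_mem_nhdsGT_of_mem (Set.mem_Ico.2 ⟨le_rfl, hs0⟩)] with a ha
        have h := hψ a ha.1 ha.2
        have h2 := hζ_pos a
        rw [hζs] at h
        have h3 : Γ s / (2 * K) * (B a - B s) = Γ s / (2 * K) * B a - Γ s / (2 * K) * B s := by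
          ring
        linarith [h3.le, h3.ge]
      have htendB : Filter.Tendsto (fun a => Γ s / (2 * K) * (B a - B s))
          (nhdsWithin 0 (Set.Ioi 0)) (nhds (Γ s / (2 * K) * (1 - B s))) := by
        have hc : Continuous fun a : ℝ => Γ s / (2 * K) * (B a - B s) := by
          rw [hBdef]
          have : Continuous fun a : ℝ => 1 - 2 * K * a ^ 2 := by continuity
          exact continuous_const.mul ((Real.continuous_sqrt.comp this).sub continuous_const)
        have h0 : (fun a : ℝ => Γ s / (2 * K) * (B a - B s)) 0
            = Γ s / (2 * K) * (1 - B s) := by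
          have hB0' : B 0 = 1 := by
            rw [hBdef]
            norm_num
          show Γ s / (2 * K) * (B 0 - B s) = Γ s / (2 * K) * (1 - B s)
          rw [hB0']
        rw [← h0]
        exact hc.continuousAt.continuousWithinAt
      exact le_of_tendsto htendB hev
    have hΓs_lb : K / B s ≤ Γ s := by
      have hw_s : 0 < 1 - 2 * m s / s := hw_pos s ⟨hs0, hsR⟩
      have hy_s : 0 < Real.sqrt (1 - 2 * m s / s) := Real.sqrt_pos.2 hw_s
      have hB0 := hB_pos s hs0 le_rfl
      have hyB_s := hyB s hs0 le_rfl
      have hms := hm_pos s ⟨hs0, hsR⟩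
      have hps := hp_pos s ⟨hs0.le, hsR⟩
      have h1 : K / B s ≤ K / Real.sqrt (1 - 2 * m s / s) := by
        gcongr
      have h2 : K / Real.sqrt (1 - 2 * m s / s) ≤ Γ s := by
        have hΓs_eq : Γ s = φ s * Real.sqrt (1 - 2 * m s / s) / s := by
          rw [hΓdef]
          show ζ s * φ s * Real.sqrt (1 - 2 * m s / s) / s
            = φ s * Real.sqrt (1 - 2 * m s / s) / s
          rw [hζs, one_mul]
        rw [hΓs_eq, div_le_div_iff₀ hy_s hs0]
        have e5 : φ s * Real.sqrt (1 - 2 * m s / s) * Real.sqrt (1 - 2 * m s / s)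
            = φ s * (1 - 2 * m s / s) := by
          rw [mul_assoc, Real.mul_self_sqrt hw_s.le]
        rw [e5]
        simp only [hφdef]
        have e6 : (m s + 4 * Real.pi * s ^ 3 * p s) / (s ^ 2 * (1 - 2 * m s / s))
            * (1 - 2 * m s / s) = (m s + 4 * Real.pi * s ^ 3 * p s) / s ^ 2 := by
          rw [div_mul_eq_mul_div,
            show (m s + 4 * Real.pi * s ^ 3 * p s) * (1 - 2 * m s / s)
              = (1 - 2 * m s / s) * (m s + 4 * Real.pi * s ^ 3 * p s) from mul_comm _ _,
            show s ^ 2 * (1 - 2 * m s / s) = (1 - 2 * m s / s) * s ^ 2 from mul_comm _ _]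
          exact mul_div_mul_left _ _ hw_s.ne'
        rw [e6, hKdef]
        have e7 : m s / s ^ 3 * s = m s / s ^ 2 := by
          rw [div_mul_eq_mul_div]
          rw [show s ^ 3 = s ^ 2 * s from by ring]
          rw [show m s * s = s * m s from mul_comm _ _,
            show s ^ 2 * s = s * s ^ 2 from mul_comm _ _]
          exact mul_div_mul_left _ _ hs0.ne'
        rw [e7]
        gcongr
        have hps' : 0 < 4 * Real.pi * s ^ 3 * p s := by positivity
        linarith
      linarith
    have hBs_pos : 0 < B s := hB_pos s hs0 le_rfl
    have hBs_le1 : B s ≤ 1 := by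
      rw [hBdef]
      rw [Real.sqrt_le_one]
      nlinarith
    have hBs2 : B s ^ 2 = 1 - 2 * K * s ^ 2 := by
      rw [hBdef]
      exact Real.sq_sqrt (hBw_pos s hs0 le_rfl).le
    have hstep : (1 - B s) / (2 * B s) ≤ 1 := by
      have h3 : K / B s / (2 * K) * (1 - B s) ≤ Γ s / (2 * K) * (1 - B s) := by
        apply mul_le_mul_of_nonneg_right _ (by linarith)
        gcongr
      have h4 : K / B s / (2 * K) * (1 - B s) = (1 - B s) / (2 * B s) := by
        field_simp
      linarith
    rw [div_le_one (by positivity)] at hstep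
    have hBs_ge : 1 / 3 ≤ B s := by linarith
    have h9 : 1 / 9 ≤ 1 - 2 * K * s ^ 2 := by nlinarith
    have hKs : K * s ^ 2 = m s / s := by
      rw [hKdef]
      field_simp
    have hgoal : 2 * m s / s = 2 * (K * s ^ 2) := by rw [hKs]; ring
    rw [hgoal]
    linarith
  -- pass to the limit s → R⁻
  have hne : (nhdsWithin R (Set.Ioo 0 R)).NeBot := by
    refine mem_closure_iff_nhdsWithin_neBot.1 ?_
    rw [closure_Ioo hR.ne]
    exact ⟨hR.le, le_rfl⟩
  have htend : Filter.Tendsto (fun s => 2 * m s / s) (nhdsWithin R (Set.Ioo 0 R))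
      (nhds (2 * m R / R)) := by
    have h1 : Filter.Tendsto m (nhdsWithin R (Set.Ioo 0 R)) (nhds (m R)) := by
      have := (hm_cont R ⟨hR.le, le_rfl⟩)
      exact this.mono_left (nhdsWithin_mono R Set.Ioo_subset_Icc_self)
    have h2 : Filter.Tendsto (fun s : ℝ => s) (nhdsWithin R (Set.Ioo 0 R)) (nhds R) :=
      tendsto_id.mono_left nhdsWithin_le_nhds
    exact ((h1.const_mul 2).div h2 hR.ne')
  exact le_of_tendsto htend (eventually_mem_nhdsWithin.mono key)
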